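/- arXiv:1710.11579 — 2 statements merged into one kernel-verified Lean document; each statement's English description precedes it below -/
import Mathlib

section
/- Let n ≥ 1 and let λ_1 ≥ λ_2 ≥ … ≥ λ_n ≥ 0 be integers. Let x(λ) ∈ 𝓘𝓜_0 be the sequence (2−2λ_1, 4−2λ_2, …, 2n−2λ_n, 2(n+1), 2(n+2), …). Then S̄_n(x(λ)) = x(λ∪1ⁿ), where λ∪1ⁿ = (λ_1+1, …, λ_n+1); explicitly, t_{2i+1}(x(λ)) = 0 for all i < −λ_1, and τ^{−1}( Σ_{i=−λ_1}^{n} (−1)^i t_{2i+1}(x(λ)) ) = (2−2(λ_1+1), 4−2(λ_2+1), …, 2n−2(λ_n+1), 2(n+1), 2(n+2), …). -/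
/-- The defining property of the set `𝓘𝓜`: strictly increasing sequences of even
integers which eventually satisfy `x_i = 2i + 2k` for some charge `k ∈ ℤ`. -/
def IMprop (x : ℕ → ℤ) : Prop :=
  StrictMono x ∧ (∀ i, Even (x i)) ∧
    ∃ k : ℤ, ∃ N : ℕ, ∀ i : ℕ, N ≤ i → x i = 2 * ((i : ℤ) + 1) + 2 * k

/-- The set `𝓘𝓜` of basis sequences (`0`-based indexing: entry `i` is `x_{i+1}`). -/
def IM : Type := {x : ℕ → ℤ // IMprop x}

/-- The fermionic Fock space `V_F`, the free abelian group on the basis `𝓘𝓜`. -/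
abbrev VF : Type := IM →₀ ℤ

lemma IM.exists_ge (x : IM) (m : ℤ) : ∃ N : ℕ, m ≤ x.1 N := by
  obtain ⟨-, -, k, N, hN⟩ := x.2
  refine ⟨N + (m - x.1 N).toNat, ?_⟩
  have h1 := hN N le_rfl
  have h2 := hN (N + (m - x.1 N).toNat) (Nat.le_add_right _ _)
  have h3 : (m - x.1 N) ≤ ((m - x.1 N).toNat : ℤ) := Int.self_le_toNat _
  have h4 : (0 : ℤ) ≤ ((m - x.1 N).toNat : ℤ) := Int.natCast_nonneg _
  push_cast at h2
  omega

/-- The position where `2j` is to be inserted into (or found in) `x`: the least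
index `N` with `2j ≤ x N`, i.e. the number of entries of `x` smaller than `2j`. -/
def posIdx (j : ℤ) (x : IM) : ℕ := Nat.find (IM.exists_ge x (2 * j))

lemma posIdx_le (j : ℤ) (x : IM) : 2 * j ≤ x.1 (posIdx j x) :=
  Nat.find_spec (IM.exists_ge x (2 * j))

lemma posIdx_lt (j : ℤ) (x : IM) : ∀ i, i < posIdx j x → x.1 i < 2 * j := by
  intro i hi
  have := Nat.find_min (IM.exists_ge x (2 * j)) hi
  omega

/-- Insertion of a value `a` into a sequence at position `p`. -/
def insSeq (x : ℕ → ℤ) (p : ℕ) (a : ℤ) : ℕ → ℤ :=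
  fun i => if i < p then x i else if i = p then a else x (i - 1)

/-- Deletion of the entry at position `p` of a sequence. -/
def delSeq (x : ℕ → ℤ) (p : ℕ) : ℕ → ℤ :=
  fun i => if i < p then x i else x (i + 1)

lemma insSeq_mem (x : ℕ → ℤ) (hx : IMprop x) (p : ℕ) (a : ℤ) (ha : Even a)
    (hlow : ∀ i, i < p → x i < a) (hhigh : a < x p) :
    IMprop (insSeq x p a) := by
  obtain ⟨hm, he, k, N, hN⟩ := hx
  refine ⟨strictMono_nat_of_lt_succ ?_, ?_, k - 1, max N p + 1, ?_⟩
  · intro i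
    by_cases h1 : i + 1 < p
    · have hi : i < p := by omega
      simp only [insSeq, if_pos hi, if_pos h1]
      exact hm (Nat.lt_succ_self i)
    · by_cases h2 : i + 1 = p
      · have hi : i < p := by omega
        simp only [insSeq, if_pos hi, if_neg h1, if_pos h2]
        exact hlow i hi
      · by_cases h3 : i = p
        · have hnl : ¬ i < p := by omega
          simp only [insSeq, if_neg hnl, if_pos h3, if_neg h1, if_neg h2]
          have e1 : i + 1 - 1 = i := by omega
          rw [e1, h3]
          exact hhigh
        · have hnl : ¬ i < p := by omega
          simp only [insSeq, if_neg hnl, if_neg h3, if_neg h1, if_neg h2]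
          have e1 : i + 1 - 1 = i := by omega
          rw [e1]
          exact hm (by omega : i - 1 < i)
  · intro i
    by_cases h1 : i < p
    · simpa [insSeq, if_pos h1] using he i
    · by_cases h2 : i = p
      · simpa [insSeq, h1, h2] using ha
      · simpa [insSeq, h1, h2] using he (i - 1)
  · intro i hi
    have h1 : ¬ i < p := by omega
    have h2 : ¬ i = p := by omega
    simp only [insSeq, if_neg h1, if_neg h2]
    rw [hN (i - 1) (by omega)]
    rw [Nat.cast_sub (by omega : 1 ≤ i)]
    push_cast
    ring

lemma delSeq_mem (x : ℕ → ℤ) (hx : IMprop x) (p : ℕ) : IMprop (delSeq x p) := by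
  obtain ⟨hm, he, k, N, hN⟩ := hx
  refine ⟨strictMono_nat_of_lt_succ ?_, ?_, k + 1, max N p, ?_⟩
  · intro i
    by_cases h1 : i + 1 < p
    · simp only [delSeq, if_pos (by omega : i < p), if_pos h1]
      exact hm (Nat.lt_succ_self i)
    · by_cases h2 : i < p
      · simp only [delSeq, if_pos h2, if_neg h1]
        exact hm (by omega : i < i + 1 + 1)
      · simp only [delSeq, if_neg h2, if_neg h1]
        exact hm (by omega : i + 1 < i + 1 + 1)
  · intro i
    by_cases h1 : i < p
    · simpa [delSeq, h1] using he i
    · simpa [delSeq, h1] using he (i + 1)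
  · intro i hi
    simp only [delSeq, if_neg (by omega : ¬ i < p)]
    rw [hN (i + 1) (by omega)]
    push_cast
    ring

/-- The creating operator `ψ_j` on a basis element: zero if `2j` occurs in `x`,
and otherwise `(−1)^n` times the basis element obtained by inserting `2j`,
where `n` is the number of entries of `x` smaller than `2j`. -/
noncomputable def psiB (j : ℤ) (x : IM) : VF :=
  if h : x.1 (posIdx j x) = 2 * j then 0
  else ((-1 : ℤ) ^ (posIdx j x)) •
    Finsupp.single (⟨insSeq x.1 (posIdx j x) (2 * j),
      insSeq_mem x.1 x.2 (posIdx j x) (2 * j) (even_two_mul j) (posIdx_lt j x)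
        (lt_of_le_of_ne (posIdx_le j x) (fun hh => h hh.symm))⟩ : IM) 1

/-- The annihilating operator `ψ_j^*` on a basis element: zero if `2j` does not
occur in `x`, and otherwise `(−1)^{n−1}` times the basis element obtained by
deleting the entry `x_n = 2j`. -/
noncomputable def psiStarB (j : ℤ) (x : IM) : VF :=
  if _ : x.1 (posIdx j x) = 2 * j then
    ((-1 : ℤ) ^ (posIdx j x)) •
      Finsupp.single (⟨delSeq x.1 (posIdx j x), delSeq_mem x.1 x.2 (posIdx j x)⟩ : IM) 1
  else 0

/-- The creating operator `ψ_j : V_F → V_F`. -/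
noncomputable def psiOp (j : ℤ) : VF →ₗ[ℤ] VF := Finsupp.lift VF ℤ IM (psiB j)

/-- The annihilating operator `ψ_j^* : V_F → V_F`. -/
noncomputable def psiStarOp (j : ℤ) : VF →ₗ[ℤ] VF := Finsupp.lift VF ℤ IM (psiStarB j)

/-- The Clifford operators: `t_{2j} = ψ_j` and `t_{2j−1} = ψ_j^* + ψ_{j−1}^*`. -/
noncomputable def tOp (m : ℤ) : VF →ₗ[ℤ] VF :=
  if m % 2 = 0 then psiOp (m / 2)
  else psiStarOp ((m + 1) / 2) + psiStarOp ((m + 1) / 2 - 1)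

/-- `msign i = (−1)^i` for an integer `i`. -/
def msign (i : ℤ) : ℤ := if Even i then 1 else -1

/-- The translation `x ↦ (x_1+2, x_2+2, …)` on basis sequences. -/
def shiftUpIM (x : IM) : IM :=
  ⟨fun i => x.1 i + 2, by
    obtain ⟨hm, he, k, N, hN⟩ := x.2
    exact ⟨fun a b hab => by simpa using hm hab,
      fun i => (he i).add even_two,
      k + 1, N, fun i hi => by
        show x.1 i + 2 = 2 * ((i : ℤ) + 1) + 2 * (k + 1)
        rw [hN i hi]; ring⟩⟩

/-- The translation `x ↦ (x_1−2, x_2−2, …)` on basis sequences. -/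
def shiftDownIM (x : IM) : IM :=
  ⟨fun i => x.1 i - 2, by
    obtain ⟨hm, he, k, N, hN⟩ := x.2
    exact ⟨fun a b hab => by simpa using hm hab,
      fun i => (he i).sub even_two,
      k - 1, N, fun i hi => by
        show x.1 i - 2 = 2 * ((i : ℤ) + 1) + 2 * (k - 1)
        rw [hN i hi]; ring⟩⟩

/-- The translation isomorphism `τ : V_F → V_F`. -/
noncomputable def tauPlus : VF →ₗ[ℤ] VF := Finsupp.lmapDomain ℤ ℤ shiftUpIM

/-- The inverse translation `τ⁻¹ : V_F → V_F`. -/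
noncomputable def tauMinus : VF →ₗ[ℤ] VF := Finsupp.lmapDomain ℤ ℤ shiftDownIM

/-- The charge-`k` part `(V_F)_k` of the Fock space: the span of the basis
sequences of charge `k`. -/
noncomputable def VFk (k : ℤ) : Submodule ℤ VF :=
  Finsupp.supported ℤ ℤ
    {x : IM | ∃ N : ℕ, ∀ i : ℕ, N ≤ i → x.1 i = 2 * ((i : ℤ) + 1) + 2 * k}

lemma psiStarOp_single (j : ℤ) (x : IM) :
    psiStarOp j (Finsupp.single x 1) = psiStarB j x := by
  simp [psiStarOp, Finsupp.lift_apply, Finsupp.sum_single_index]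

lemma posIdx_eq (j : ℤ) (x : IM) (p : ℕ) (hp : x.1 p = 2 * j) : posIdx j x = p := by
  have h2 : posIdx j x ≤ p := Nat.find_le hp.ge
  rcases lt_or_eq_of_le h2 with h | h
  · have h3 : x.1 (posIdx j x) < x.1 p := x.2.1 h
    have h4 := posIdx_le j x
    omega
  · exact h

lemma psiStarB_of_eq (j : ℤ) (x : IM) (p : ℕ) (hp : x.1 p = 2 * j) :
    psiStarB j x = ((-1 : ℤ) ^ p) •
      Finsupp.single (⟨delSeq x.1 p, delSeq_mem x.1 x.2 p⟩ : IM) 1 := by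
  have h := posIdx_eq j x p hp
  subst h
  unfold psiStarB
  rw [dif_pos hp]

lemma psiStarB_of_lt (j : ℤ) (x : IM) (hj : 2 * j < x.1 0) : psiStarB j x = 0 := by
  have h : x.1 (posIdx j x) ≠ 2 * j := by
    have h2 : x.1 0 ≤ x.1 (posIdx j x) := x.2.1.monotone (Nat.zero_le _)
    omega
  unfold psiStarB
  rw [dif_neg h]

lemma tOp_odd (i : ℤ) : tOp (2 * i + 1) = psiStarOp (i + 1) + psiStarOp i := by
  have h1 : ¬ (2 * i + 1) % 2 = 0 := by omega
  have h2 : (2 * i + 1 + 1) / 2 = i + 1 := by omega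
  have h3 : i + 1 - 1 = i := by ring
  unfold tOp
  rw [if_neg h1, h2, h3]

lemma msign_succ (i : ℤ) : msign (i + 1) = -msign i := by
  by_cases h : Even i <;> simp [msign, h, Int.even_add_one]

lemma msign_natCast (n : ℕ) : msign (n : ℤ) = (-1) ^ n := by
  induction n with
  | zero => simp [msign]
  | succ k ih => push_cast; rw [msign_succ, ih, pow_succ]; ring

lemma telescope {M : Type*} [AddCommGroup M] (G : ℤ → M) (a b : ℤ) (hab : a ≤ b) :
    ∑ i ∈ Finset.Icc a b, (G i - G (i + 1)) = G a - G (b + 1) := by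
  refine Int.le_induction (motive := fun c _ => ∑ i ∈ Finset.Icc a c, (G i - G (i + 1)) = G a - G (c + 1)) ?_ ?_ b hab
  · simp
  · intro b hb ih
    have hins : Finset.Icc a (b + 1) = insert (b + 1) (Finset.Icc a b) := by
      ext t
      simp only [Finset.mem_Icc, Finset.mem_insert]
      omega
    rw [hins, Finset.sum_insert (by simp), ih]
    abel

/-- Theorem 6.5 computation: for `n ≥ 1` and integers `λ_1 ≥ … ≥ λ_n ≥ 0`, with
`x(λ) = (2−2λ_1, 4−2λ_2, …, 2n−2λ_n, 2(n+1), …) ∈ 𝓘𝓜_0` and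
`λ∪1ⁿ = (λ_1+1, …, λ_n+1)`, one has `S̄_n(x(λ)) = x(λ∪1ⁿ)`; explicitly,
`t_{2i+1}(x(λ)) = 0` for all `i < −λ_1`, and
`τ⁻¹(Σ_{i=−λ_1}^{n} (−1)^i t_{2i+1}(x(λ))) = x(λ∪1ⁿ)`. -/
theorem Sbar_on_basis (n : ℕ) (hn : 1 ≤ n) (lam : ℕ → ℕ)
    (hdec : ∀ i, i + 1 < n → lam (i + 1) ≤ lam i)
    (x y : IM)
    (hx : ∀ i, i < n → x.1 i = 2 * ((i : ℤ) + 1) - 2 * (lam i : ℤ))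
    (hx' : ∀ i, n ≤ i → x.1 i = 2 * ((i : ℤ) + 1))
    (hy : ∀ i, i < n → y.1 i = 2 * ((i : ℤ) + 1) - 2 * ((lam i : ℤ) + 1))
    (hy' : ∀ i, n ≤ i → y.1 i = 2 * ((i : ℤ) + 1)) :
    (∀ i : ℤ, i < -(lam 0 : ℤ) → tOp (2 * i + 1) (Finsupp.single x 1) = 0) ∧
    tauMinus (∑ i ∈ Finset.Icc (-(lam 0 : ℤ)) (n : ℤ),
        msign i • tOp (2 * i + 1) (Finsupp.single x 1)) = Finsupp.single y 1 ∧
    tauMinus (∑ᶠ i : ℤ,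
        if i ≤ (n : ℤ) then msign i • tOp (2 * i + 1) (Finsupp.single x 1) else 0) =
      Finsupp.single y 1 := by
  have hx0 : x.1 0 = 2 - 2 * (lam 0 : ℤ) := by
    have := hx 0 hn; push_cast at this; omega
  have hzero : ∀ i : ℤ, i < -(lam 0 : ℤ) → tOp (2 * i + 1) (Finsupp.single x 1) = 0 := by
    intro i hi
    rw [tOp_odd]
    simp only [LinearMap.add_apply, psiStarOp_single]
    rw [psiStarB_of_lt _ _ (by omega), psiStarB_of_lt _ _ (by omega), add_zero]
  have key : ∀ i : ℤ, msign i • tOp (2 * i + 1) (Finsupp.single x 1)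
      = (msign i • psiStarB i x) - (msign (i + 1) • psiStarB (i + 1) x) := by
    intro i
    rw [tOp_odd]
    simp only [LinearMap.add_apply, psiStarOp_single, smul_add, msign_succ, neg_smul]
    abel
  have hxn : x.1 n = 2 * ((n : ℤ) + 1) := hx' n le_rfl
  have hGa : psiStarB (-(lam 0 : ℤ)) x = 0 := psiStarB_of_lt _ _ (by omega)
  have hdel : psiStarB ((n : ℤ) + 1) x = ((-1 : ℤ) ^ n) •
      Finsupp.single (⟨delSeq x.1 n, delSeq_mem x.1 x.2 n⟩ : IM) 1 :=
    psiStarB_of_eq _ _ n hxn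
  have hsum : (∑ i ∈ Finset.Icc (-(lam 0 : ℤ)) (n : ℤ),
        msign i • tOp (2 * i + 1) (Finsupp.single x 1))
      = Finsupp.single (⟨delSeq x.1 n, delSeq_mem x.1 x.2 n⟩ : IM) 1 := by
    rw [Finset.sum_congr rfl (fun i _ => key i),
      telescope _ _ _ (by omega), hGa, hdel, smul_zero]
    erw [smul_smul]
    have hms : msign ((n : ℤ) + 1) * (-1) ^ n = -1 := by
      rw [msign_succ, msign_natCast, neg_mul, ← pow_add, Even.neg_one_pow ⟨n, rfl⟩]
    rw [hms]
    simp
    erw [neg_smul, one_smul, neg_neg]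
  have hy2 : shiftDownIM ⟨delSeq x.1 n, delSeq_mem x.1 x.2 n⟩ = y := by
    apply Subtype.ext
    funext i
    show delSeq x.1 n i - 2 = y.1 i
    by_cases h : i < n
    · simp only [delSeq, if_pos h]
      rw [hx i h, hy i h]; ring
    · simp only [delSeq, if_neg h]
      rw [hx' (i + 1) (by omega), hy' i (by omega)]; push_cast; ring
  have htau : tauMinus (Finsupp.single (⟨delSeq x.1 n, delSeq_mem x.1 x.2 n⟩ : IM) 1)
      = Finsupp.single y 1 := by
    rw [tauMinus, Finsupp.lmapDomain_apply]
    erw [Finsupp.mapDomain_single, hy2]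
  refine ⟨hzero, by rw [hsum]; exact htau, ?_⟩
  have hss : Function.support (fun i : ℤ =>
      if i ≤ (n : ℤ) then msign i • tOp (2 * i + 1) (Finsupp.single x 1) else 0)
      ⊆ (Finset.Icc (-(lam 0 : ℤ)) (n : ℤ) : Set ℤ) := by
    intro i hi
    simp only [Function.mem_support] at hi
    simp only [Finset.coe_Icc, Set.mem_Icc]
    constructor
    · by_contra h
      exact hi (by rw [if_pos (by omega), hzero i (by omega), smul_zero])
    · by_contra h
      exact hi (if_neg (by omega))
  rw [finsum_eq_finset_sum_of_support_subset _ hss,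
    Finset.sum_congr rfl (fun i hi => if_pos (Finset.mem_Icc.mp hi).2), hsum]
  exact htau
end

section
/- Let n ≥ 1 and let λ be a partition with at most n parts, written λ = (λ_1 ≥ … ≥ λ_n ≥ 0), with the convention λ_{n+1} = 0. For 0 ≤ t ≤ n define the partition λ^t = (λ_1+1, …, λ_{n−t}+1, λ_{n−t+2}, …, λ_n, 0) (so λ^0 = (λ_1+1, …, λ_n+1) and λ^n = (λ_2, …, λ_n, 0)). Then S_n(𝔵(λ)) = Σ_{t=0}^{n} (−1)^{t+n} 𝔵(λ^t); moreover, among the vectors t_{2s}(𝔵(λ)) with integer s ≥ −n, exactly those with s = λ_{n−t+1} − (n−t) for some t ∈ {0,…,n} are nonzero. -/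
/-- The partition `λ^t = (λ_1+1, …, λ_{n−t}+1, λ_{n−t+2}, …, λ_n, 0)`
(0-based indexing). -/
def lamT (n : ℕ) (lam : ℕ → ℕ) (t : ℕ) : ℕ → ℕ :=
  fun i => if i < n - t then lam i + 1 else if i + 1 < n then lam (i + 1) else 0

/-- The conjugate partition: `conjC N a i = #{j < N : a_j ≥ i+1}`
(counting within the first `N` rows). -/
def conjC (N : ℕ) (a : ℕ → ℕ) (i : ℕ) : ℕ :=
  ((Finset.range N).filter (fun j => i + 1 ≤ a j)).card


section Aux

lemma filter_shift (a b : ℕ) (Q : ℕ → Prop) [DecidablePred Q] :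
    ((Finset.Ico a b).filter (fun j => Q (j + 1))).card
      = ((Finset.Ico (a + 1) (b + 1)).filter (fun j => Q j)).card := by
  refine Finset.card_bij' (fun j _ => j + 1) (fun j _ => j - 1) ?_ ?_ ?_ ?_
  · intro j hj
    simp only [Finset.mem_filter, Finset.mem_Ico] at hj ⊢
    exact ⟨⟨by omega, by omega⟩, hj.2⟩
  · intro j hj
    simp only [Finset.mem_filter, Finset.mem_Ico] at hj ⊢
    refine ⟨⟨by omega, by omega⟩, ?_⟩
    have h : j - 1 + 1 = j := by omega
    rw [h]; exact hj.2
  · intro j _; show j + 1 - 1 = j; omega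
  · intro j hj
    simp only [Finset.mem_filter, Finset.mem_Ico] at hj
    show j - 1 + 1 = j; omega

lemma card_split (m N : ℕ) (h : m ≤ N) (P : ℕ → Prop) [DecidablePred P] :
    ((Finset.range N).filter P).card =
      ((Finset.Ico 0 m).filter P).card + ((Finset.Ico m N).filter P).card := by
  rw [Finset.range_eq_Ico, ← Finset.Ico_union_Ico_eq_Ico (Nat.zero_le m) h,
    Finset.filter_union, Finset.card_union_of_disjoint]
  exact Finset.disjoint_filter_filter (Finset.Ico_disjoint_Ico_consecutive 0 m N)

lemma lamT_eval (n u : ℕ) (lam : ℕ → ℕ) (hu : u ≤ n) (j : ℕ) :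
    lamT n lam (n - u) j
      = if j < u then lam j + 1 else if j + 1 < n then lam (j + 1) else 0 := by
  have h : n - (n - u) = u := by omega
  simp [lamT, h]

section cases
variable {n u : ℕ} {lam : ℕ → ℕ}

lemma conjC_lamT_lt (hu : u ≤ n) (hanti : ∀ a b : ℕ, a ≤ b → lam b ≤ lam a)
    (hsupp : ∀ i, n ≤ i → lam i = 0) {i : ℕ} (hi : i < lam u) :
    conjC n (lamT n lam (n - u)) i + 1 = conjC n lam i := by
  have hun : u < n := by
    by_contra h
    have : lam u = 0 := hsupp u (by omega)
    omega
  unfold conjC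
  rw [card_split u n (by omega), card_split (u+1) n (by omega)]
  have e1 : (Finset.Ico 0 u).filter (fun j => i + 1 ≤ lamT n lam (n - u) j)
      = Finset.Ico 0 u := by
    apply Finset.filter_true_of_mem
    intro j hj
    rw [Finset.mem_Ico] at hj
    rw [lamT_eval n u lam hu, if_pos hj.2]
    have := hanti j u (by omega)
    omega
  have e2 : (Finset.Ico 0 (u+1)).filter (fun j => i + 1 ≤ lam j) = Finset.Ico 0 (u+1) := by
    apply Finset.filter_true_of_mem
    intro j hj
    rw [Finset.mem_Ico] at hj
    have := hanti j u (by omega)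
    omega
  have e3 : (Finset.Ico u n).filter (fun j => i + 1 ≤ lamT n lam (n - u) j)
      = (Finset.Ico u (n-1)).filter (fun j => i + 1 ≤ lam (j + 1)) := by
    ext j
    simp only [Finset.mem_filter, Finset.mem_Ico, lamT_eval n u lam hu]
    constructor
    · rintro ⟨⟨h1, h2⟩, hq⟩
      rw [if_neg (by omega)] at hq
      by_cases h3 : j + 1 < n
      · rw [if_pos h3] at hq; exact ⟨⟨h1, by omega⟩, hq⟩
      · rw [if_neg h3] at hq; omega
    · rintro ⟨⟨h1, h2⟩, hq⟩
      refine ⟨⟨h1, by omega⟩, ?_⟩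
      rw [if_neg (by omega), if_pos (by omega)]
      exact hq
  rw [e1, e2, e3, filter_shift u (n-1) (fun j => i + 1 ≤ lam j)]
  have e4 : n - 1 + 1 = n := by omega
  rw [e4]
  simp only [Nat.card_Ico, Nat.sub_zero]
  omega

lemma conjC_lamT_eq (hu : u ≤ n) (hanti : ∀ a b : ℕ, a ≤ b → lam b ≤ lam a) :
    conjC n (lamT n lam (n - u)) (lam u) = u := by
  unfold conjC
  rw [card_split u n hu]
  have e1 : (Finset.Ico 0 u).filter (fun j => lam u + 1 ≤ lamT n lam (n - u) j)
      = Finset.Ico 0 u := by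
    apply Finset.filter_true_of_mem
    intro j hj
    rw [Finset.mem_Ico] at hj
    rw [lamT_eval n u lam hu, if_pos hj.2]
    have := hanti j u (by omega)
    omega
  have e2 : (Finset.Ico u n).filter (fun j => lam u + 1 ≤ lamT n lam (n - u) j) = ∅ := by
    apply Finset.filter_false_of_mem
    intro j hj
    rw [Finset.mem_Ico] at hj
    rw [lamT_eval n u lam hu, if_neg (by omega)]
    by_cases h3 : j + 1 < n
    · rw [if_pos h3]
      have := hanti u (j+1) (by omega)
      omega
    · rw [if_neg h3]; omega
  rw [e1, e2]
  simp

lemma conjC_lamT_gt (hu : u ≤ n) (hanti : ∀ a b : ℕ, a ≤ b → lam b ≤ lam a)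
    {i : ℕ} (hi : lam u < i) :
    conjC n (lamT n lam (n - u)) i = conjC n lam (i - 1) := by
  unfold conjC
  have e0 : i - 1 + 1 = i := by omega
  rw [e0, card_split u n hu, card_split u n hu]
  have e1 : (Finset.Ico 0 u).filter (fun j => i + 1 ≤ lamT n lam (n - u) j)
      = (Finset.Ico 0 u).filter (fun j => i ≤ lam j) := by
    apply Finset.filter_congr
    intro j hj
    rw [Finset.mem_Ico] at hj
    rw [lamT_eval n u lam hu, if_pos hj.2]
    omega
  have e2 : (Finset.Ico u n).filter (fun j => i + 1 ≤ lamT n lam (n - u) j) = ∅ := by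
    apply Finset.filter_false_of_mem
    intro j hj
    rw [Finset.mem_Ico] at hj
    rw [lamT_eval n u lam hu, if_neg (by omega)]
    by_cases h3 : j + 1 < n
    · rw [if_pos h3]
      have := hanti u (j+1) (by omega)
      omega
    · rw [if_neg h3]; omega
  have e3 : (Finset.Ico u n).filter (fun j => i ≤ lam j) = ∅ := by
    apply Finset.filter_false_of_mem
    intro j hj
    rw [Finset.mem_Ico] at hj
    have := hanti u j (by omega)
    omega
  rw [e1, e2, e3]

end cases

lemma msign_congr {a b : ℤ} (h : a % 2 = b % 2) : msign a = msign b := by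
  unfold msign
  simp only [Int.even_iff]
  rw [h]

lemma neg_one_pow_eq_msign (m : ℕ) : ((-1 : ℤ)) ^ m = msign (m : ℤ) := by
  unfold msign
  rcases Nat.even_or_odd m with h | h
  · rw [h.neg_one_pow, if_pos (by exact_mod_cast h)]
  · rw [h.neg_one_pow, if_neg (by
      rw [Int.even_coe_nat]
      exact Nat.not_even_iff_odd.mpr h)]

lemma msign_mul (a b : ℤ) : msign a * msign b = msign (a + b) := by
  unfold msign
  simp only [Int.even_iff]
  split_ifs <;> omega

lemma tOp_two_mul (s : ℤ) : tOp (2 * s) = psiOp s := by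
  rw [tOp, if_pos (Int.mul_emod_right 2 s), Int.mul_ediv_cancel_left s (by norm_num)]

lemma psiOp_single (s : ℤ) (x : IM) : psiOp s (Finsupp.single x 1) = psiB s x := by
  rw [psiOp, Finsupp.lift_apply, Finsupp.sum_single_index (by simp), one_smul]

lemma tauPlus_single (y : IM) (c : ℤ) :
    tauPlus (Finsupp.single y c) = Finsupp.single (shiftUpIM y) c := by
  rw [tauPlus, Finsupp.lmapDomain_apply, Finsupp.mapDomain_single]

end Aux

/-- Theorem 6.9 computation: for a partition `λ` with at most `n` parts,
`S_n(𝔵(λ)) = Σ_{t=0}^{n} (−1)^{t+n} 𝔵(λ^t)`, and among the `t_{2s}(𝔵(λ))` with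
`s ≥ −n`, exactly those with `s = λ_{n−t+1} − (n−t)` (i.e. `s = λ_{u+1} − u`
for some `0 ≤ u ≤ n`, with 1-based part `λ_{u+1}` read as `lam u`) are nonzero. -/
theorem Sn_on_basis (n : ℕ) (hn : 1 ≤ n) (lam : ℕ → ℕ)
    (hdec : ∀ i, lam (i + 1) ≤ lam i) (hsupp : ∀ i, n ≤ i → lam i = 0)
    (x : IM) (xs : ℕ → IM)
    (hx : ∀ i, x.1 i = 2 * ((i : ℤ) + 1) - 2 * (conjC n lam i : ℤ))
    (hxs : ∀ t, t ≤ n → ∀ i,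
      (xs t).1 i = 2 * ((i : ℤ) + 1) - 2 * (conjC n (lamT n lam t) i : ℤ)) :
    tauPlus (∑ᶠ s : ℤ,
        if -(n : ℤ) ≤ s then msign s • tOp (2 * s) (Finsupp.single x 1) else 0) =
      ∑ t ∈ Finset.range (n + 1), msign ((t : ℤ) + (n : ℤ)) • Finsupp.single (xs t) 1 ∧
    ∀ s : ℤ, -(n : ℤ) ≤ s →
      (tOp (2 * s) (Finsupp.single x 1) ≠ 0 ↔ ∃ u : ℕ, u ≤ n ∧ s = (lam u : ℤ) - (u : ℤ)) := by
  have hanti : ∀ a b : ℕ, a ≤ b → lam b ≤ lam a :=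
    fun a b h => antitone_nat_of_succ_le hdec h
  -- key facts for the nonzero case
  have key : ∀ u : ℕ, u ≤ n →
      posIdx ((lam u : ℤ) - u) x = lam u ∧
        x.1 (lam u) ≠ 2 * ((lam u : ℤ) - u) := by
    intro u hu
    have hCle : conjC n lam (lam u) ≤ u := by
      have hsub : (Finset.range n).filter (fun j => lam u + 1 ≤ lam j)
          ⊆ Finset.range u := by
        intro j hj
        simp only [Finset.mem_filter, Finset.mem_range] at hj ⊢
        by_contra h
        have := hanti u j (by omega)
        omega
      have := Finset.card_le_card hsub
      rw [Finset.card_range] at this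
      exact this
    have hhigh : 2 * ((lam u : ℤ) - u) < x.1 (lam u) := by
      have h1 := hx (lam u)
      omega
    have hlow : ∀ k, k < lam u → x.1 k < 2 * ((lam u : ℤ) - u) := by
      intro k hk
      have hun : u < n := by
        by_contra h
        have := hsupp u (by omega)
        omega
      have hge : u + 1 ≤ conjC n lam k := by
        have hsub : Finset.range (u+1)
            ⊆ (Finset.range n).filter (fun j => k + 1 ≤ lam j) := by
          intro j hj
          simp only [Finset.mem_range, Finset.mem_filter] at hj ⊢
          have := hanti j u (by omega)
          exact ⟨by omega, by omega⟩
        have := Finset.card_le_card hsub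
        rw [Finset.card_range] at this
        exact this
      have h1 := hx k
      omega
    refine ⟨?_, by omega⟩
    rw [posIdx, Nat.find_eq_iff]
    exact ⟨le_of_lt hhigh, fun k hk => not_le.mpr (hlow k hk)⟩
  -- evaluation in the nonzero case
  have heval : ∀ u : ℕ, u ≤ n → ∃ z : IM,
      z.1 = insSeq x.1 (lam u) (2 * ((lam u : ℤ) - u)) ∧
      tOp (2 * ((lam u : ℤ) - u)) (Finsupp.single x 1)
        = Finsupp.single z ((-1 : ℤ) ^ (lam u)) := by
    intro u hu
    obtain ⟨hpos, hne⟩ := key u hu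
    rw [tOp_two_mul, psiOp_single]
    unfold psiB
    rw [dif_neg (by rw [hpos]; exact hne)]
    erw [Finsupp.smul_single', mul_one]
    simp only [hpos]
    exact ⟨_, rfl, rfl⟩
  -- vanishing in the remaining cases
  have hzero : ∀ s : ℤ, -(n : ℤ) ≤ s →
      (¬ ∃ u : ℕ, u ≤ n ∧ s = (lam u : ℤ) - u) →
      tOp (2 * s) (Finsupp.single x 1) = 0 := by
    intro s hs hno
    have hlamn : lam n = 0 := hsupp n le_rfl
    have hPn : (lam n : ℤ) < s + n := by
      have hne : s ≠ -(n : ℤ) := fun h => hno ⟨n, le_rfl, by rw [hlamn]; omega⟩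
      omega
    have hex : ∃ u : ℕ, (lam u : ℤ) < s + u := ⟨n, hPn⟩
    have hfind : (lam (Nat.find hex) : ℤ) < s + (Nat.find hex) := Nat.find_spec hex
    set u0 := Nat.find hex with hu0def
    have hu0n : u0 ≤ n := Nat.find_le hPn
    have hprev : ∀ j : ℕ, j < u0 → s + u0 ≤ (lam j : ℤ) := by
      intro j hj
      have h1 : ¬ ((lam (u0-1) : ℤ) < s + ((u0-1 : ℕ) : ℤ)) :=
        Nat.find_min hex (by omega)
      have h2 : s ≠ (lam (u0-1) : ℤ) - ((u0-1 : ℕ) : ℤ) :=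
        fun h => hno ⟨u0-1, by omega, h⟩
      have h3 := hanti j (u0-1) (by omega)
      omega
    have hi0 : (0 : ℤ) ≤ s + (u0 : ℤ) - 1 := by omega
    set i := (s + (u0 : ℤ) - 1).toNat with hidef
    have hic : (i : ℤ) = s + u0 - 1 := Int.toNat_of_nonneg hi0
    have hCi : conjC n lam i = u0 := by
      unfold conjC
      have hfe : (Finset.range n).filter (fun j => i + 1 ≤ lam j)
          = Finset.range u0 := by
        ext j
        simp only [Finset.mem_filter, Finset.mem_range]
        constructor
        · rintro ⟨hjn, hj⟩
          by_contra h
          have := hanti u0 j (by omega)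
          omega
        · intro hj
          have h1 := hprev j hj
          have hjn : j < n := by
            by_contra h
            have := hsupp j (by omega)
            omega
          exact ⟨hjn, by omega⟩
      rw [hfe, Finset.card_range]
    have hxi : x.1 i = 2 * s := by
      have := hx i
      omega
    have hpos : posIdx s x = i := by
      rw [posIdx, Nat.find_eq_iff]
      refine ⟨le_of_eq hxi.symm, fun k hk => ?_⟩
      have := x.2.1 hk
      omega
    rw [tOp_two_mul, psiOp_single]
    unfold psiB
    rw [dif_pos (by rw [hpos]; exact hxi)]
  -- the characterization of nonvanishing (second half of the statement)
  have hiff : ∀ s : ℤ, -(n : ℤ) ≤ s →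
      (tOp (2 * s) (Finsupp.single x 1) ≠ 0 ↔
        ∃ u : ℕ, u ≤ n ∧ s = (lam u : ℤ) - (u : ℤ)) := by
    intro s hs
    constructor
    · intro hne
      by_contra hno
      exact hne (hzero s hs hno)
    · rintro ⟨u, hu, rfl⟩ hz
      obtain ⟨z, hz1, hz2⟩ := heval u hu
      rw [hz2] at hz
      have := Finsupp.single_eq_zero.mp hz
      exact pow_ne_zero _ (by norm_num : (-1 : ℤ) ≠ 0) this
  refine ⟨?_, hiff⟩
  -- the sum
  have hsuppG : Function.support (fun s : ℤ =>
      if -(n : ℤ) ≤ s then msign s • tOp (2 * s) (Finsupp.single x 1) else 0)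
      ⊆ ((Finset.range (n+1)).image (fun u : ℕ => (lam u : ℤ) - u) : Finset ℤ) := by
    intro s hsG
    simp only [Function.mem_support] at hsG
    by_cases h1 : -(n : ℤ) ≤ s
    · rw [if_pos h1] at hsG
      have h2 : tOp (2 * s) (Finsupp.single x 1) ≠ 0 := by
        intro h
        rw [h, smul_zero] at hsG
        exact hsG rfl
      obtain ⟨u, hu, rfl⟩ := (hiff s h1).mp h2
      simp only [Finset.coe_image, Set.mem_image, Finset.mem_coe, Finset.mem_range]
      exact ⟨u, by omega, rfl⟩
    · rw [if_neg h1] at hsG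
      exact absurd rfl hsG
  rw [finsum_eq_finset_sum_of_support_subset _ hsuppG]
  have hinj : ∀ a ∈ Finset.range (n+1), ∀ b ∈ Finset.range (n+1),
      (lam a : ℤ) - a = (lam b : ℤ) - b → a = b := by
    intro a _ b _ h
    rcases lt_trichotomy a b with hab | hab | hab
    · have := hanti a b (le_of_lt hab); omega
    · exact hab
    · have := hanti b a (le_of_lt hab); omega
  rw [Finset.sum_image hinj, map_sum]
  rw [← Finset.sum_range_reflect
    (fun t => msign ((t : ℤ) + (n : ℤ)) • Finsupp.single (xs t) 1) (n+1)]
  refine Finset.sum_congr rfl ?_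
  intro u humem
  rw [Finset.mem_range] at humem
  have hu : u ≤ n := by omega
  simp only [Nat.add_sub_cancel]
  rw [if_pos (by omega : -(n : ℤ) ≤ (lam u : ℤ) - u)]
  obtain ⟨z, hz1, hz2⟩ := heval u hu
  rw [hz2, map_smul, tauPlus_single]
  have hkey : shiftUpIM z = xs (n - u) := by
    apply Subtype.ext
    funext i
    show z.1 i + 2 = (xs (n - u)).1 i
    rw [hz1, hxs (n - u) (Nat.sub_le n u) i]
    rcases lt_trichotomy i (lam u) with hilt | hieq | higt
    · simp only [insSeq]
      rw [if_pos hilt, hx i]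
      have := conjC_lamT_lt hu hanti hsupp hilt
      omega
    · subst hieq
      simp only [insSeq]
      rw [if_neg (by omega), if_pos trivial]
      have := conjC_lamT_eq hu hanti
      omega
    · simp only [insSeq]
      rw [if_neg (by omega), if_neg (by omega), hx (i - 1)]
      have := conjC_lamT_gt hu hanti higt
      omega
  rw [hkey, Finsupp.smul_single', Finsupp.smul_single', mul_one]
  congr 1
  rw [neg_one_pow_eq_msign, msign_mul]
  apply msign_congr
  omega
end
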